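/- Let λ ∈ (0,1) and θ ∈ (0,∞) with θ ≠ 1/2 and θ ≠ 1. Let c be the unique zero of f(c) = (c/((2θ−1+2cθ)(2−2θ−c(2θ−1))))^((1−θ)/(θ−1/2)) − (2θ−1+2cθ)²/(1−λ) in I(θ), set s̄ = (c/((2θ−1+2cθ)(2−2θ−c(2θ−1))))^(1/(2θ−1)), and define g(s) = (−cs + (2θ−1+2cθ)s^(2θ))/(s − (2−2θ−c(2θ−1))s^(2θ)). Then for every s in the closed interval with endpoints 1 and s̄, the derivative satisfies g'(s) > 0, and g(s) lies in the closed interval with endpoints 1 and (1−λ)s̄. -/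

import Mathlib

open Real

/-- The interval `I(θ)` in which the root `c` of `f` is located. -/
noncomputable def noTradeInterval (θ : ℝ) : Set ℝ :=
  if θ < 1/2 then Set.Ioi ((1 - θ)/θ)
  else if θ < 1 then Set.Ioo ((1 - θ)/θ) ((1 - θ)/(θ - 1/2))
  else Set.Ioo ((1 - θ)/θ) 0

private lemma rpow_mem_uIcc_aux {a b x p : ℝ} (ha : 0 < a) (hb : 0 < b)
    (hx : x ∈ Set.uIcc a b) : x ^ p ∈ Set.uIcc (a ^ p) (b ^ p) := by
  rcases le_total a b with h | h
  · rw [Set.uIcc_of_le h] at hx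
    rcases le_or_gt 0 p with hp | hp
    · exact Set.Icc_subset_uIcc ⟨Real.rpow_le_rpow ha.le hx.1 hp,
        Real.rpow_le_rpow (ha.trans_le hx.1).le hx.2 hp⟩
    · exact Set.Icc_subset_uIcc' ⟨Real.rpow_le_rpow_of_nonpos (ha.trans_le hx.1) hx.2 hp.le,
        Real.rpow_le_rpow_of_nonpos ha hx.1 hp.le⟩
  · rw [Set.uIcc_of_ge h] at hx
    rcases le_or_gt 0 p with hp | hp
    · exact Set.Icc_subset_uIcc' ⟨Real.rpow_le_rpow hb.le hx.1 hp,
        Real.rpow_le_rpow (hb.trans_le hx.1).le hx.2 hp⟩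
    · exact Set.Icc_subset_uIcc ⟨Real.rpow_le_rpow_of_nonpos (hb.trans_le hx.1) hx.2 hp.le,
        Real.rpow_le_rpow_of_nonpos hb hx.1 hp.le⟩

theorem growth_optimal_g_monotone_and_range
    (lam θ c sbar : ℝ) (g : ℝ → ℝ)
    (hlam : lam ∈ Set.Ioo (0:ℝ) 1) (hθ : 0 < θ) (hθhalf : θ ≠ 1/2) (hθone : θ ≠ 1)
    (hcI : c ∈ noTradeInterval θ)
    (hfc : (c / ((2*θ - 1 + 2*c*θ) * (2 - 2*θ - c*(2*θ - 1)))) ^ ((1 - θ)/(θ - 1/2))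
        - (2*θ - 1 + 2*c*θ)^2 / (1 - lam) = 0)
    (hsbar : sbar = (c / ((2*θ - 1 + 2*c*θ) * (2 - 2*θ - c*(2*θ - 1)))) ^ (1/(2*θ - 1)))
    (hg : ∀ s : ℝ, g s = (-c*s + (2*θ - 1 + 2*c*θ) * s ^ (2*θ))
        / (s - (2 - 2*θ - c*(2*θ - 1)) * s ^ (2*θ))) :
    ∀ s ∈ Set.uIcc (1:ℝ) sbar,
      0 < deriv g s ∧ g s ∈ Set.uIcc (1:ℝ) ((1 - lam) * sbar) := by
  obtain ⟨hlam0, hlam1⟩ := hlam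
  have h1lam : (0:ℝ) < 1 - lam := by linarith
  have h2θ : (2*θ - 1 : ℝ) ≠ 0 := by
    intro h; apply hθhalf; linarith
  have hθh : (θ - 1/2 : ℝ) ≠ 0 := by
    intro h; apply hθhalf; linarith
  obtain ⟨a, ha_def⟩ : ∃ a : ℝ, a = 2*θ - 1 + 2*c*θ := ⟨_, rfl⟩
  obtain ⟨b, hb_def⟩ : ∃ b : ℝ, b = 2 - 2*θ - c*(2*θ - 1) := ⟨_, rfl⟩
  rw [← ha_def, ← hb_def] at hfc hsbar hg
  obtain ⟨k, hk_def⟩ : ∃ k : ℝ, k = c / (a*b) := ⟨_, rfl⟩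
  rw [← hk_def] at hfc hsbar
  -- case facts
  have hcases : (θ < 1/2 ∧ (1-θ)/θ < c) ∨
      (1/2 < θ ∧ θ < 1 ∧ (1-θ)/θ < c ∧ c < (1-θ)/(θ-1/2)) ∨
      (1 < θ ∧ (1-θ)/θ < c ∧ c < 0) := by
    unfold noTradeInterval at hcI
    split_ifs at hcI with h1 h2
    · exact Or.inl ⟨h1, hcI⟩
    · exact Or.inr (Or.inl ⟨lt_of_le_of_ne (not_lt.mp h1) (Ne.symm hθhalf), h2, hcI.1, hcI.2⟩)
    · exact Or.inr (Or.inr ⟨lt_of_le_of_ne (not_lt.mp h2) (Ne.symm hθone), hcI.1, hcI.2⟩)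
  have hlc : (1-θ)/θ < c := by
    rcases hcases with ⟨_, h⟩ | ⟨_, _, h, _⟩ | ⟨_, h, _⟩ <;> exact h
  have hcθ : 1 - θ < c * θ := (div_lt_iff₀ hθ).mp hlc
  have hc1 : 0 < 1 + c := by nlinarith
  have ha1 : 1 < a := by rw [ha_def]; linarith
  have ha0 : 0 < a := by linarith
  have hane : a ≠ 0 := ha0.ne'
  have hab1 : a - c = 1 - b := by rw [ha_def, hb_def]; ring
  -- key sign facts
  have hmain : 0 < k ∧ ∀ u ∈ Set.uIcc (1:ℝ) k, 1 - b*u ≠ 0 := by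
    rcases hcases with ⟨h1, _⟩ | ⟨h1, h2, _, hrc⟩ | ⟨h1, _, hrc⟩
    · -- θ < 1/2 : b > 1, c/a > 1, so b*u > 1
      have hc0 : 1 < c := lt_trans ((lt_div_iff₀ hθ).mpr (by linarith)) hlc
      have h12 : (0:ℝ) < 1 - 2*θ := by linarith
      have hb1 : 1 < b := by
        rw [hb_def]; linarith [mul_pos h12 hc1]
      have hb0 : 0 < b := by linarith
      have hk0 : 0 < k := by
        rw [hk_def]; exact div_pos (by linarith) (mul_pos ha0 hb0)
      have hbk : b * k = c / a := by rw [hk_def]; field_simp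
      have hca : 1 < c / a := (one_lt_div ha0).mpr (by
        rw [ha_def]; linarith [mul_pos h12 hc1])
      refine ⟨hk0, fun u hu => ?_⟩
      have h1bu : 1 < b * u := by
        rcases le_total 1 k with h | h
        · rw [Set.uIcc_of_le h] at hu
          calc (1:ℝ) < b := hb1
            _ = b * 1 := by ring
            _ ≤ b * u := mul_le_mul_of_nonneg_left hu.1 hb0.le
        · rw [Set.uIcc_of_ge h] at hu
          calc (1:ℝ) < c / a := hca
            _ = b * k := hbk.symm
            _ ≤ b * u := mul_le_mul_of_nonneg_left hu.1 hb0.le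
      exact fun hz => by rw [sub_eq_zero] at hz; linarith
    · -- 1/2 < θ < 1 : 0 < b < 1, c/a < 1, so b*u < 1
      have hc0 : 0 < c := lt_trans (div_pos (by linarith) hθ) hlc
      have hb0 : 0 < b := by
        have := (lt_div_iff₀ (show (0:ℝ) < θ - 1/2 by linarith)).mp hrc
        rw [hb_def]; linarith
      have h21 : (0:ℝ) < 2*θ - 1 := by linarith
      have hb1 : b < 1 := by
        rw [hb_def]; linarith [mul_pos h21 hc1]
      have hk0 : 0 < k := by
        rw [hk_def]; exact div_pos hc0 (mul_pos ha0 hb0)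
      have hbk : b * k = c / a := by rw [hk_def]; field_simp
      have hca : c / a < 1 := (div_lt_one ha0).mpr (by
        rw [ha_def]; linarith [mul_pos h21 hc1])
      refine ⟨hk0, fun u hu => ?_⟩
      have h1bu : b * u < 1 := by
        rcases le_total 1 k with h | h
        · rw [Set.uIcc_of_le h] at hu
          calc b * u ≤ b * k := mul_le_mul_of_nonneg_left hu.2 hb0.le
            _ = c / a := hbk
            _ < 1 := hca
        · rw [Set.uIcc_of_ge h] at hu
          calc b * u ≤ b * 1 := mul_le_mul_of_nonneg_left hu.2 hb0.le
            _ = b := by ring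
            _ < 1 := hb1
      exact fun hz => by rw [sub_eq_zero] at hz; linarith
    · -- θ > 1 : b < 0, c < 0, u > 0, so b*u < 0 < 1
      have hθb : θ * b < 0 := by
        have hbθ : θ * b = 2*θ - 2*θ^2 - (c*θ)*(2*θ-1) := by rw [hb_def]; ring
        linarith [mul_lt_mul_of_pos_right hcθ (show (0:ℝ) < 2*θ-1 by linarith),
          sq_nonneg θ, hbθ.ge, hbθ.le]
      have hb0 : b < 0 := by
        by_contra hb
        push_neg at hb
        linarith [mul_nonneg hθ.le hb]
      have hk0 : 0 < k := by
        rw [hk_def]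
        exact div_pos_of_neg_of_neg hrc (mul_neg_of_pos_of_neg ha0 hb0)
      refine ⟨hk0, fun u hu => ?_⟩
      have hu0 : 0 < u := by
        rcases le_total 1 k with h | h
        · rw [Set.uIcc_of_le h] at hu; linarith [hu.1]
        · rw [Set.uIcc_of_ge h] at hu; linarith [hu.1]
      have : b * u < 0 := mul_neg_of_neg_of_pos hb0 hu0
      exact fun hz => by rw [sub_eq_zero] at hz; linarith
  obtain ⟨hk0, hbu⟩ := hmain
  have hbne : b ≠ 0 := by
    intro h
    rw [hk_def, h, mul_zero, div_zero] at hk0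
    exact lt_irrefl 0 hk0
  have habk : a * b * k = c := by rw [hk_def]; field_simp
  -- sbar facts
  have hsb0 : 0 < sbar := hsbar ▸ Real.rpow_pos_of_pos hk0 _
  have hsbk : sbar ^ (2*θ - 1) = k := by
    rw [hsbar, ← Real.rpow_mul hk0.le, one_div_mul_cancel h2θ, Real.rpow_one]
  have hs2θsbar : sbar ^ (2*θ) = sbar * k := by
    rw [show (2*θ:ℝ) = 1 + (2*θ - 1) by ring, Real.rpow_add hsb0, Real.rpow_one, hsbk]
  have hspos : ∀ s ∈ Set.uIcc (1:ℝ) sbar, 0 < s := by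
    intro s hs
    rcases le_total 1 sbar with h | h
    · rw [Set.uIcc_of_le h] at hs; linarith [hs.1]
    · rw [Set.uIcc_of_ge h] at hs; linarith [hs.1]
  have hsfac : ∀ s : ℝ, 0 < s → s - b * s ^ (2*θ) = s * (1 - b * s ^ (2*θ - 1)) := by
    intro s hs0
    rw [show (2*θ:ℝ) = 1 + (2*θ - 1) by ring, Real.rpow_add hs0, Real.rpow_one]
    ring
  have huIcc : ∀ s ∈ Set.uIcc (1:ℝ) sbar, s ^ (2*θ - 1) ∈ Set.uIcc (1:ℝ) k := by
    intro s hs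
    have := rpow_mem_uIcc_aux one_pos hsb0 hs (p := 2*θ - 1)
    rwa [Real.one_rpow, hsbk] at this
  have hD : ∀ s ∈ Set.uIcc (1:ℝ) sbar, s - b * s ^ (2*θ) ≠ 0 := by
    intro s hs
    have hs0 := hspos s hs
    rw [hsfac s hs0]
    exact mul_ne_zero hs0.ne' (hbu _ (huIcc s hs))
  -- the function as a lambda
  have hgfun : g = fun s => (-c*s + a * s ^ (2*θ)) / (s - b * s ^ (2*θ)) := funext hg
  -- derivative
  have hder : ∀ s ∈ Set.uIcc (1:ℝ) sbar, HasDerivAt g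
      (((-c + a * (2*θ * s ^ (2*θ - 1))) * (s - b * s ^ (2*θ))
        - (-c*s + a * s ^ (2*θ)) * (1 - b * (2*θ * s ^ (2*θ - 1))))
        / (s - b * s ^ (2*θ))^2) s := by
    intro s hs
    have hs0 := hspos s hs
    have h1 : HasDerivAt (fun x : ℝ => x ^ (2*θ)) (2*θ * s ^ (2*θ - 1)) s :=
      Real.hasDerivAt_rpow_const (Or.inl hs0.ne')
    have hN : HasDerivAt (fun x : ℝ => -c*x + a * x ^ (2*θ)) (-c + a * (2*θ * s ^ (2*θ - 1))) s := by
      have := ((hasDerivAt_id s).const_mul (-c)).add (h1.const_mul a)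
      rw [mul_one] at this
      exact this.congr_of_eventuallyEq (Filter.Eventually.of_forall fun x => by simp)
    have hDd : HasDerivAt (fun x : ℝ => x - b * x ^ (2*θ)) (1 - b * (2*θ * s ^ (2*θ - 1))) s := by
      have := (hasDerivAt_id s).sub (h1.const_mul b)
      exact this.congr_of_eventuallyEq (Filter.Eventually.of_forall fun x => by simp)
    rw [hgfun]
    exact hN.div hDd (hD s hs)
  have hpos : ∀ s ∈ Set.uIcc (1:ℝ) sbar, 0 < deriv g s := by
    intro s hs
    have hs0 := hspos s hs
    rw [(hder s hs).deriv]
    have hnum : (-c + a * (2*θ * s ^ (2*θ - 1))) * (s - b * s ^ (2*θ))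
        - (-c*s + a * s ^ (2*θ)) * (1 - b * (2*θ * s ^ (2*θ - 1)))
        = (2*θ - 1)^2 * (1 + c)^2 * (s * s ^ (2*θ - 1)) := by
      rw [show (2*θ:ℝ) = 1 + (2*θ - 1) by ring, Real.rpow_add hs0, Real.rpow_one,
        ha_def, hb_def]
      ring
    rw [hnum]
    apply div_pos
    · have h1 : (0:ℝ) < (2*θ - 1)^2 := lt_of_le_of_ne (sq_nonneg _) (Ne.symm (pow_ne_zero 2 h2θ))
      have h2 : (0:ℝ) < (1 + c)^2 := lt_of_le_of_ne (sq_nonneg _) (Ne.symm (pow_ne_zero 2 hc1.ne'))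
      have h3 : (0:ℝ) < s * s ^ (2*θ - 1) := mul_pos hs0 (Real.rpow_pos_of_pos hs0 _)
      positivity
    · exact lt_of_le_of_ne (sq_nonneg _) (Ne.symm (pow_ne_zero 2 (hD s hs)))
  -- endpoint values
  have hDu1 : (1:ℝ) - b * 1 ≠ 0 := by
    have := hbu 1 Set.left_mem_uIcc
    simpa using this
  have hg1 : g 1 = 1 := by
    rw [hg 1, Real.one_rpow]
    rw [div_eq_one_iff_eq (by simpa using hDu1)]
    rw [ha_def, hb_def]; ring
  have hDsbar : sbar - b * sbar ^ (2*θ) ≠ 0 := hD sbar Set.right_mem_uIcc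
  have hgsbar : g sbar = a * c / b := by
    rw [hg sbar]
    rw [div_eq_div_iff hDsbar hbne, hs2θsbar]
    linear_combination sbar * (1 + c) * habk - c * sbar * hab1
  -- 1 - lam = a^2 * (k / sbar)
  have hexp : (1 - θ)/(θ - 1/2) = 1/(2*θ - 1) * (2 - 2*θ) := by
    rw [one_div_mul_eq_div, div_eq_div_iff hθh h2θ]; ring
  have hXeq : k ^ ((1 - θ)/(θ - 1/2)) = sbar ^ (2 - 2*θ) := by
    rw [hsbar, ← Real.rpow_mul hk0.le, hexp]
  have hX : sbar ^ (2 - 2*θ) = a^2 / (1 - lam) := by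
    rw [← hXeq]; linarith [hfc]
  have hXpos : (0:ℝ) < sbar ^ (2 - 2*θ) := Real.rpow_pos_of_pos hsb0 _
  have hXmul : (1 - lam) * sbar ^ (2 - 2*θ) = a^2 := by
    rw [hX]; field_simp
  have hYeq : sbar ^ (2*θ - 2) = k / sbar := by
    rw [show (2*θ - 2:ℝ) = (2*θ - 1) - 1 by ring, Real.rpow_sub hsb0, hsbk, Real.rpow_one]
  have hXY : sbar ^ (2 - 2*θ) * sbar ^ (2*θ - 2) = 1 := by
    rw [← Real.rpow_add hsb0, show (2 - 2*θ) + (2*θ - 2) = (0:ℝ) by ring, Real.rpow_zero]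
  have hfin : 1 - lam = a^2 * (k / sbar) := by
    calc 1 - lam = (1 - lam) * (sbar ^ (2 - 2*θ) * sbar ^ (2*θ - 2)) := by rw [hXY, mul_one]
      _ = ((1 - lam) * sbar ^ (2 - 2*θ)) * sbar ^ (2*θ - 2) := by ring
      _ = a^2 * (k / sbar) := by rw [hXmul, hYeq]
  have hlamsbar : (1 - lam) * sbar = g sbar := by
    rw [hgsbar, hfin]
    have h6 : a^2*(k/sbar)*sbar = a^2*k := by field_simp
    rw [h6, eq_div_iff hbne]
    linear_combination a * habk
  -- monotonicity
  have hcont : ContinuousOn g (Set.uIcc (1:ℝ) sbar) :=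
    fun s hs => ((hder s hs).continuousAt).continuousWithinAt
  have hmono : StrictMonoOn g (Set.uIcc (1:ℝ) sbar) := by
    apply strictMonoOn_of_deriv_pos (convex_uIcc 1 sbar) hcont
    intro x hx
    exact hpos x (interior_subset hx)
  have hmonoOn : MonotoneOn g (Set.uIcc (1:ℝ) sbar) := hmono.monotoneOn
  intro s hs
  refine ⟨hpos s hs, ?_⟩
  rcases le_total 1 sbar with h | h
  · have hs' := hs
    rw [Set.uIcc_of_le h] at hs'
    have h1le : g 1 ≤ g s := hmonoOn Set.left_mem_uIcc hs hs'.1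
    have h2le : g s ≤ g sbar := hmonoOn hs Set.right_mem_uIcc hs'.2
    exact Set.Icc_subset_uIcc ⟨by rw [← hg1]; exact h1le, by rw [hlamsbar]; exact h2le⟩
  · have hs' := hs
    rw [Set.uIcc_of_ge h] at hs'
    have h1le : g sbar ≤ g s := hmonoOn Set.right_mem_uIcc hs hs'.1
    have h2le : g s ≤ g 1 := hmonoOn hs Set.left_mem_uIcc hs'.2
    exact Set.Icc_subset_uIcc' ⟨by rw [hlamsbar]; exact h1le, by rw [← hg1]; exact h2le⟩
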